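/- Let $\alpha = (\frac{r}{2}, \frac{r}{2}, 0, 0, \ldots) \in \ell_1$ with $0 < r < 1$, and let $W_\alpha = \{x \in c : \lim_i x(i) = \frac{r}{2}(x(1)+x(2))\}$. Then $\alpha$ is a $\sigma(\ell_1, W_\alpha)$-limit point of the set $\{\pm e_n^* : n \in \mathbb{N}\}$ of extreme points of $B_{\ell_1}$, and $0 < \|\alpha\|_1 = r < 1$; in particular the set of $w^*$-limit points of $\mathrm{ext}\,B_{\ell_1}$ is not contained in $\{0\}$ but is contained in $rB_{\ell_1}$. -/

import Mathlib

open Filter Topology ENNReal NormedSpace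

noncomputable section

instance : Fact ((1:ℝ≥0∞) ≤ 1) := ⟨le_rfl⟩

/-- The space `ℓ₁` of absolutely summable real sequences. -/
abbrev ell1 : Type := lp (fun _ : ℕ => ℝ) 1

/-- The standard unit vector basis of `ℓ₁`. -/
def basisv (i : ℕ) : ell1 := lp.single 1 i (1:ℝ)

/-- The weak-star topology `σ(ℓ₁, X)` on `ℓ₁` induced by a predual `X` via an
isometric identification `e` of the dual of `X` with `ℓ₁`. -/
def wstar (X : Type*) [NormedAddCommGroup X] [NormedSpace ℝ X]
    (e : StrongDual ℝ X ≃ₗᵢ[ℝ] ell1) : TopologicalSpace ell1 :=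
  TopologicalSpace.induced (fun y => StrongDual.toWeakDual (e.symm y)) inferInstance

/-- The weak-star topology `σ(Y*, Y)` on the dual of a normed space `Y`. -/
def wsDual (Y : Type*) [NormedAddCommGroup Y] [NormedSpace ℝ Y] :
    TopologicalSpace (StrongDual ℝ Y) :=
  TopologicalSpace.induced (fun φ : StrongDual ℝ Y => StrongDual.toWeakDual φ)
    inferInstance

-- auxiliary
lemma aux_mem {Y X : Type*} [TopologicalSpace Y] [TopologicalSpace X] {g : Y → X}
    (hg : Continuous g) {S : Set Y} {V : Set X} (hV : IsClosed V)
    (hSV : Set.MapsTo g S V) {y : Y} (hy : y ∈ closure S) : g y ∈ V :=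
  hV.closure_eq ▸ map_mem_closure hg hy hSV

lemma aux_isolated {Y X : Type*} [TopologicalSpace Y] [TopologicalSpace X] {g : Y → X}
    (hg : Continuous g) {S : Set Y} {V : Set X} (hV : IsOpen V) {y : Y}
    (hyV : g y ∈ V) (hempty : ∀ z ∈ S, g z ∉ V) : y ∉ closure S := by
  intro hy
  obtain ⟨z, hzV, hzS⟩ := mem_closure_iff.mp hy (g ⁻¹' V) (hV.preimage hg) hyV
  exact hempty z hzS hzV

lemma aux_mem_closure {Y : Type*} [TopologicalSpace Y] {f : ℕ → Y} {y : Y} {S : Set Y}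
    (h : Tendsto f atTop (𝓝 y)) (hf : ∀ n, f n ∈ S) : y ∈ closure S :=
  mem_closure_of_tendsto h (Eventually.of_forall hf)

lemma basisv_apply (n i : ℕ) : (basisv n) i = if i = n then (1:ℝ) else 0 := by
  by_cases h : i = n
  · subst h; simp [basisv, lp.single_apply_self]
  · simp [basisv, lp.single_apply_ne (E := fun _ : ℕ => ℝ) 1 n (1:ℝ) h, h]

lemma tsum_basisv (n : ℕ) (v : ℕ → ℝ) : ∑' i, (basisv n) i * v i = v n := by
  rw [tsum_eq_single n (fun b hb => by simp [basisv_apply, hb])]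
  simp [basisv_apply]

lemma tsum_neg_basisv (n : ℕ) (v : ℕ → ℝ) : ∑' i, (-(basisv n)) i * v i = -v n := by
  rw [tsum_eq_single n (fun b hb => by simp [lp.coeFn_neg, Pi.neg_apply, basisv_apply, hb])]
  simp [lp.coeFn_neg, Pi.neg_apply, basisv_apply]

lemma ell1_norm_eq (y : ell1) : ‖y‖ = ∑' i, ‖y i‖ := by
  have h := lp.norm_eq_tsum_rpow (p := 1) (E := fun _ : ℕ => ℝ) (by norm_num) y
  simpa using h

lemma ell1_norm_two (y : ell1) (h : ∀ b, 2 ≤ b → y b = 0) : ‖y‖ = |y 0| + |y 1| := by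
  rw [ell1_norm_eq, tsum_eq_sum (s := ({0,1} : Finset ℕ)) (by
    intro b hb
    simp only [Finset.mem_insert, Finset.mem_singleton] at hb
    push_neg at hb
    have hb2 : 2 ≤ b := by omega
    simp [h b hb2])]
  rw [Finset.sum_pair (by norm_num : (0:ℕ) ≠ 1)]
  simp [Real.norm_eq_abs]

def emv (m i : ℕ) : ℝ := if i = m then 1 else 0
def xv0 (r : ℝ) (i : ℕ) : ℝ := if i = 0 then 1 else if i = 1 then 0 else r/2
def xv1 (r : ℝ) (i : ℕ) : ℝ := if i = 0 then 0 else if i = 1 then 1 else r/2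

@[simp] lemma emv_self (m : ℕ) : emv m m = 1 := if_pos rfl
lemma emv_ne {m i : ℕ} (h : i ≠ m) : emv m i = 0 := if_neg h
@[simp] lemma xv0_zero (r : ℝ) : xv0 r 0 = 1 := rfl
@[simp] lemma xv0_one (r : ℝ) : xv0 r 1 = 0 := rfl
lemma xv0_two (r : ℝ) {i : ℕ} (h : 2 ≤ i) : xv0 r i = r/2 := by
  unfold xv0; rw [if_neg (by omega), if_neg (by omega)]
@[simp] lemma xv1_zero (r : ℝ) : xv1 r 0 = 0 := rfl
@[simp] lemma xv1_one (r : ℝ) : xv1 r 1 = 1 := rfl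
lemma xv1_two (r : ℝ) {i : ℕ} (h : 2 ≤ i) : xv1 r i = r/2 := by
  unfold xv1; rw [if_neg (by omega), if_neg (by omega)]

lemma emv_tendsto (m : ℕ) : Tendsto (emv m) atTop (𝓝 0) := by
  refine Tendsto.congr' ?_ tendsto_const_nhds
  filter_upwards [eventually_gt_atTop m] with i hi
  exact (emv_ne (by omega)).symm

lemma xv0_tendsto (r : ℝ) : Tendsto (xv0 r) atTop (𝓝 (r/2)) := by
  refine Tendsto.congr' ?_ tendsto_const_nhds
  filter_upwards [eventually_ge_atTop 2] with i hi
  exact (xv0_two r hi).symm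

lemma xv1_tendsto (r : ℝ) : Tendsto (xv1 r) atTop (𝓝 (r/2)) := by
  refine Tendsto.congr' ?_ tendsto_const_nhds
  filter_upwards [eventually_ge_atTop 2] with i hi
  exact (xv1_two r hi).symm

lemma tsum_emv (z : ell1) (m : ℕ) : ∑' i, z i * emv m i = z m := by
  rw [tsum_eq_single m (fun b hb => by simp [emv_ne hb])]
  simp

lemma tsum_xv0 (r : ℝ) (z : ell1) (h : ∀ b, 2 ≤ b → z b = 0) :
    ∑' i, z i * xv0 r i = z 0 := by
  rw [tsum_eq_single 0 ?_]
  · simp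
  · intro b hb
    rcases Nat.lt_or_ge b 2 with hb2 | hb2
    · have hb1 : b = 1 := by omega
      subst hb1; simp
    · simp [h b hb2]

lemma tsum_xv1 (r : ℝ) (z : ell1) (h : ∀ b, 2 ≤ b → z b = 0) :
    ∑' i, z i * xv1 r i = z 1 := by
  rw [tsum_eq_single 1 ?_]
  · simp
  · intro b hb
    rcases Nat.lt_or_ge b 2 with hb2 | hb2
    · have hb1 : b = 0 := by omega
      subst hb1; simp
    · simp [h b hb2]

lemma tsum_xv0' (r : ℝ) (z : ell1) (m : ℕ) (hm : 2 ≤ m) (h : ∀ b, 2 ≤ b → b ≠ m → z b = 0) :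
    ∑' i, z i * xv0 r i = z 0 + z m * (r/2) := by
  rw [tsum_eq_sum (s := ({0, m} : Finset ℕ)) ?_]
  · rw [Finset.sum_pair (by omega : (0:ℕ) ≠ m)]
    rw [xv0_two r hm, xv0_zero, mul_one]
  · intro b hb
    simp only [Finset.mem_insert, Finset.mem_singleton] at hb
    push_neg at hb
    rcases Nat.lt_or_ge b 2 with hb2 | hb2
    · have hb1 : b = 1 := by omega
      subst hb1; simp
    · simp [h b hb2 hb.2]

lemma tsum_xv1' (r : ℝ) (z : ell1) (m : ℕ) (hm : 2 ≤ m) (h : ∀ b, 2 ≤ b → b ≠ m → z b = 0) :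
    ∑' i, z i * xv1 r i = z 1 + z m * (r/2) := by
  rw [tsum_eq_sum (s := ({1, m} : Finset ℕ)) ?_]
  · rw [Finset.sum_pair (by omega : (1:ℕ) ≠ m)]
    rw [xv1_two r hm, xv1_one, mul_one]
  · intro b hb
    simp only [Finset.mem_insert, Finset.mem_singleton] at hb
    push_neg at hb
    rcases Nat.lt_or_ge b 2 with hb2 | hb2
    · have hb1 : b = 0 := by omega
      subst hb1; simp
    · simp [h b hb2 hb.2]

lemma alpha_apply (r : ℝ) (i : ℕ) :
    (lp.single 1 0 (r/2) + lp.single 1 1 (r/2) : ell1) i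
      = if i = 0 then r/2 else if i = 1 then r/2 else 0 := by
  rw [lp.coeFn_add, Pi.add_apply]
  rcases Nat.lt_or_ge i 2 with hi | hi
  · interval_cases i
    · rw [lp.single_apply_self, lp.single_apply_ne (E := fun _ : ℕ => ℝ) 1 1 _ (by norm_num)]
      norm_num
    · rw [lp.single_apply_self, lp.single_apply_ne (E := fun _ : ℕ => ℝ) 1 0 _ (by norm_num)]
      norm_num
  · rw [lp.single_apply_ne (E := fun _ : ℕ => ℝ) 1 0 _ (by omega), lp.single_apply_ne (E := fun _ : ℕ => ℝ) 1 1 _ (by omega),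
      if_neg (by omega), if_neg (by omega)]
    norm_num

lemma tsum_alpha (r : ℝ) (v : ℕ → ℝ) :
    ∑' i, (lp.single 1 0 (r/2) + lp.single 1 1 (r/2) : ell1) i * v i
      = r/2 * (v 0 + v 1) := by
  rw [tsum_eq_sum (s := ({0,1} : Finset ℕ)) (by
    intro b hb
    simp only [Finset.mem_insert, Finset.mem_singleton] at hb
    push_neg at hb
    rw [alpha_apply, if_neg hb.1, if_neg hb.2, zero_mul])]
  rw [Finset.sum_pair (by norm_num : (0:ℕ) ≠ 1), alpha_apply, alpha_apply]
  norm_num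
  ring

lemma basisv_ne_alpha (r : ℝ) (hr0 : 0 < r) (hr1 : r < 1) (n : ℕ) :
    basisv n ≠ (lp.single 1 0 (r/2) + lp.single 1 1 (r/2) : ell1) := by
  intro h
  have h1 := congrArg (fun z : ell1 => z 1) h
  simp only [basisv_apply, alpha_apply] at h1
  norm_num at h1
  by_cases h1n : (1:ℕ) = n
  · rw [if_pos h1n] at h1; linarith
  · rw [if_neg h1n] at h1; linarith

lemma neg_basisv_ne_alpha (r : ℝ) (hr0 : 0 < r) (hr1 : r < 1) (n : ℕ) :
    -basisv n ≠ (lp.single 1 0 (r/2) + lp.single 1 1 (r/2) : ell1) := by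
  intro h
  have h1 := congrArg (fun z : ell1 => z 1) h
  simp only [lp.coeFn_neg, Pi.neg_apply, basisv_apply, alpha_apply] at h1
  norm_num at h1
  by_cases h1n : (1:ℕ) = n
  · rw [if_pos h1n] at h1; linarith
  · rw [if_neg h1n] at h1; linarith
set_option maxHeartbeats 1000000 in
theorem stmt8 (r : ℝ) (hr0 : 0 < r) (hr1 : r < 1) :
    let αl1 : ell1 := lp.single 1 0 (r / 2) + lp.single 1 1 (r / 2)
    let Wmem : (ℕ → ℝ) → Prop := fun x =>
      (∃ L : ℝ, Tendsto x atTop (𝓝 L)) ∧ Tendsto x atTop (𝓝 (r / 2 * (x 0 + x 1)))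
    let ws : TopologicalSpace ell1 := TopologicalSpace.induced
      (fun y : ell1 => fun w : {x : ℕ → ℝ // Wmem x} => ∑' i, y i * w.1 i) inferInstance
    let E : Set ell1 := {z | ∃ i, z = basisv i ∨ z = -basisv i}
    αl1 ∈ @closure _ ws (E \ {αl1}) ∧ ‖αl1‖ = r ∧
      (∀ y : ell1, y ∈ @closure _ ws (E \ {y}) → ‖y‖ ≤ r) := by
  intro αl1 Wmem ws E
  -- membership of the test sequences in the predual
  have hWem : ∀ m : ℕ, 2 ≤ m → Wmem (emv m) := by
    intro m hm
    refine ⟨⟨0, emv_tendsto m⟩, ?_⟩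
    have h0 : emv m 0 = 0 := emv_ne (by omega)
    have h1 : emv m 1 = 0 := emv_ne (by omega)
    rw [h0, h1]
    simpa using emv_tendsto m
  have hW0 : Wmem (xv0 r) := by
    refine ⟨⟨r/2, xv0_tendsto r⟩, ?_⟩
    rw [xv0_zero, xv0_one]
    simpa using xv0_tendsto r
  have hW1 : Wmem (xv1 r) := by
    refine ⟨⟨r/2, xv1_tendsto r⟩, ?_⟩
    rw [xv1_zero, xv1_one]
    simpa using xv1_tendsto r
  -- continuity of evaluation maps
  have hcont : ∀ (v : ℕ → ℝ), Wmem v →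
      @Continuous ell1 ℝ ws _ (fun z : ell1 => ∑' i, z i * v i) := by
    intro v hv
    have h1 : @Continuous ell1 ({x : ℕ → ℝ // Wmem x} → ℝ) ws _
        (fun y : ell1 => fun w : {x : ℕ → ℝ // Wmem x} => ∑' i, y i * w.1 i) :=
      continuous_induced_dom
    exact (continuous_apply (⟨v, hv⟩ : {x : ℕ → ℝ // Wmem x})).comp h1
  have hcont2 : ∀ (v1 : ℕ → ℝ), Wmem v1 → ∀ (v2 : ℕ → ℝ), Wmem v2 →
      @Continuous ell1 (ℝ × ℝ) ws _
        (fun z : ell1 => (∑' i, z i * v1 i, ∑' i, z i * v2 i)) := by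
    intro v1 h1 v2 h2
    exact Continuous.prodMk (hcont v1 h1) (hcont v2 h2)
  have hcont3 : ∀ (v1 : ℕ → ℝ), Wmem v1 → ∀ (v2 : ℕ → ℝ), Wmem v2 → ∀ (v3 : ℕ → ℝ), Wmem v3 →
      @Continuous ell1 (ℝ × ℝ × ℝ) ws _
        (fun z : ell1 => (∑' i, z i * v1 i, (∑' i, z i * v2 i, ∑' i, z i * v3 i))) := by
    intro v1 h1 v2 h2 v3 h3
    exact Continuous.prodMk (hcont v1 h1) (Continuous.prodMk (hcont v2 h2) (hcont v3 h3))
  -- description of elements of E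
  have hEval : ∀ z ∈ E, ∃ (n : ℕ) (σ : ℝ), (σ = 1 ∨ σ = -1) ∧ z = σ • basisv n ∧
      (∀ v : ℕ → ℝ, ∑' i, z i * v i = σ * v n) := by
    intro z hz
    obtain ⟨n, hz1 | hz1⟩ := hz
    · exact ⟨n, 1, Or.inl rfl, by rw [hz1, one_smul],
        fun v => by rw [hz1, tsum_basisv]; ring⟩
    · exact ⟨n, -1, Or.inr rfl, by rw [hz1]; simp,
        fun v => by rw [hz1, tsum_neg_basisv]; ring⟩
  refine ⟨?_, ?_, ?_⟩
  · -- part 1 : αl1 is in the closure of E \ {αl1}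
    have htendF : ∀ w : {x : ℕ → ℝ // Wmem x},
        Tendsto (fun n => ∑' i, (basisv n) i * w.1 i) atTop (𝓝 (∑' i, αl1 i * w.1 i)) := by
      intro w
      have h2 : ∑' i, αl1 i * w.1 i = r/2 * (w.1 0 + w.1 1) := tsum_alpha r w.1
      rw [h2]
      have h1 : (fun n => ∑' i, (basisv n) i * w.1 i) = fun n => w.1 n := by
        funext n; exact tsum_basisv n w.1
      rw [h1]
      exact w.2.2
    have htend : Tendsto basisv atTop (@nhds _ ws αl1) := by
      have hnh : @nhds _ ws αl1 = Filter.comap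
          (fun y : ell1 => fun w : {x : ℕ → ℝ // Wmem x} => ∑' i, y i * w.1 i)
          (𝓝 (fun w : {x : ℕ → ℝ // Wmem x} => ∑' i, αl1 i * w.1 i)) :=
        nhds_induced _ _
      rw [hnh, tendsto_comap_iff, tendsto_pi_nhds]
      intro w
      exact htendF w
    refine @aux_mem_closure ell1 ws basisv αl1 (E \ {αl1}) htend ?_
    intro n
    exact ⟨⟨n, Or.inl rfl⟩, fun hmem => basisv_ne_alpha r hr0 hr1 n hmem⟩
  · -- part 2 : norm of αl1
    have htail : ∀ b, 2 ≤ b → αl1 b = 0 := by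
      intro b hb
      show (lp.single 1 0 (r/2) + lp.single 1 1 (r/2) : ell1) b = 0
      rw [alpha_apply, if_neg (by omega), if_neg (by omega)]
    rw [ell1_norm_two αl1 htail]
    have e0 : αl1 0 = r/2 := by
      show (lp.single 1 0 (r/2) + lp.single 1 1 (r/2) : ell1) 0 = r/2
      rw [alpha_apply]; norm_num
    have e1 : αl1 1 = r/2 := by
      show (lp.single 1 0 (r/2) + lp.single 1 1 (r/2) : ell1) 1 = r/2
      rw [alpha_apply]; norm_num
    rw [e0, e1, abs_of_nonneg (by linarith)]
    ring
  · -- part 3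
    intro y hy
    -- y is not itself an element of E (isolation of points of E)
    have hyE : y ∉ E := by
      intro hymem
      obtain ⟨n, σ, hσ, hyform, hyval⟩ := hEval y hymem
      set N := max n 2 with hNdef
      have hN2 : 2 ≤ N := le_max_right _ _
      have hVopen : IsOpen {p : ℝ × ℝ × ℝ |
          |p.1 - σ * emv N n| < 1/2 ∧ |p.2.1 - σ * xv0 r n| < 1/2 ∧
            |p.2.2 - σ * xv1 r n| < 1/2} := by
        have h1 : IsOpen {p : ℝ × ℝ × ℝ | |p.1 - σ * emv N n| < 1/2} :=
          isOpen_lt ((continuous_fst.sub continuous_const).abs) continuous_const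
        have h2 : IsOpen {p : ℝ × ℝ × ℝ | |p.2.1 - σ * xv0 r n| < 1/2} :=
          isOpen_lt (((continuous_fst.comp continuous_snd).sub continuous_const).abs)
            continuous_const
        have h3 : IsOpen {p : ℝ × ℝ × ℝ | |p.2.2 - σ * xv1 r n| < 1/2} :=
          isOpen_lt (((continuous_snd.comp continuous_snd).sub continuous_const).abs)
            continuous_const
        exact h1.inter (h2.inter h3)
      have hyV : (fun z : ell1 =>
          (∑' i, z i * emv N i, (∑' i, z i * xv0 r i, ∑' i, z i * xv1 r i))) y ∈
          {p : ℝ × ℝ × ℝ | |p.1 - σ * emv N n| < 1/2 ∧ |p.2.1 - σ * xv0 r n| < 1/2 ∧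
            |p.2.2 - σ * xv1 r n| < 1/2} := by
        simp only [hyval, Set.mem_setOf_eq, sub_self, abs_zero]
        norm_num
      have hempty : ∀ z ∈ E \ {y}, (fun z : ell1 =>
          (∑' i, z i * emv N i, (∑' i, z i * xv0 r i, ∑' i, z i * xv1 r i))) z ∉
          {p : ℝ × ℝ × ℝ | |p.1 - σ * emv N n| < 1/2 ∧ |p.2.1 - σ * xv0 r n| < 1/2 ∧
            |p.2.2 - σ * xv1 r n| < 1/2} := by
        rintro z ⟨hzE, hzny⟩ hzV
        obtain ⟨k, τ, hτ, hzform, hzval⟩ := hEval z hzE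
        simp only [hzval, Set.mem_setOf_eq] at hzV
        obtain ⟨C1, C2, C3⟩ := hzV
        have hkn : k = n := by
          by_contra hkn
          rcases Nat.lt_or_ge n 2 with hn2 | hn2
          · rcases Nat.lt_or_ge k 2 with hk2 | hk2
            · rcases (by omega : (n = 0 ∧ k = 1) ∨ (n = 1 ∧ k = 0)) with ⟨rfl, rfl⟩ | ⟨rfl, rfl⟩
              · simp only [xv0_one, xv0_zero, mul_zero, mul_one, zero_sub, abs_neg] at C2
                rcases hσ with rfl | rfl <;> norm_num at C2
              · simp only [xv0_one, xv0_zero, mul_zero, mul_one, sub_zero] at C2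
                rcases hτ with rfl | rfl <;> norm_num at C2
            · rcases (by omega : n = 0 ∨ n = 1) with rfl | rfl
              · rw [xv0_two r hk2, xv0_zero] at C2
                rcases hσ with rfl | rfl <;> rcases hτ with rfl | rfl <;>
                  linarith [(abs_lt.mp C2).1, (abs_lt.mp C2).2]
              · rw [xv1_two r hk2, xv1_one] at C3
                rcases hσ with rfl | rfl <;> rcases hτ with rfl | rfl <;>
                  linarith [(abs_lt.mp C3).1, (abs_lt.mp C3).2]
          · have hNn : N = n := max_eq_left hn2
            have he1 : emv N n = 1 := by rw [hNn]; exact emv_self n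
            have he2 : emv N k = 0 := emv_ne (by omega)
            rw [he1, he2] at C1
            simp only [mul_zero, mul_one, zero_sub, abs_neg] at C1
            rcases hσ with rfl | rfl <;> norm_num at C1
        have hτσ : τ = σ := by
          by_contra hts
          rw [hkn] at C1 C2 C3
          rcases Nat.lt_or_ge n 2 with hn2 | hn2
          · rcases (by omega : n = 0 ∨ n = 1) with rfl | rfl
            · rw [xv0_zero, mul_one, mul_one] at C2
              rcases hσ with rfl | rfl <;> rcases hτ with rfl | rfl <;>
                first | exact hts rfl | norm_num at C2
            · rw [xv1_one, mul_one, mul_one] at C3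
              rcases hσ with rfl | rfl <;> rcases hτ with rfl | rfl <;>
                first | exact hts rfl | norm_num at C3
          · have he1 : emv N n = 1 := by rw [show N = n from max_eq_left hn2]; exact emv_self n
            rw [he1, mul_one, mul_one] at C1
            rcases hσ with rfl | rfl <;> rcases hτ with rfl | rfl <;>
              first | exact hts rfl | norm_num at C1
        rw [hkn, hτσ] at hzform
        exact hzny (hzform.trans hyform.symm)
      exact (@aux_isolated ell1 (ℝ × ℝ × ℝ) ws _
        (fun z : ell1 => (∑' i, z i * emv N i, (∑' i, z i * xv0 r i, ∑' i, z i * xv1 r i)))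
        (hcont3 (emv N) (hWem N hN2) (xv0 r) hW0 (xv1 r) hW1)
        (E \ {y}) _ hVopen y hyV hempty) hy
    have hyCl : y ∈ @closure _ ws E := by
      rw [Set.diff_singleton_eq_self hyE] at hy
      exact hy
    -- all coordinates beyond the first two vanish
    have htail : ∀ m, 2 ≤ m → y m = 0 := by
      intro m hm
      have hBgen : ∀ s : ℝ, s = 1 ∨ s = -1 → y m = s → False := by
        intro s hs hym
        have hB1 : ∀ k, 2 ≤ k → k ≠ m → y k = 0 := by
          intro k hk hkm
          have hmaps : Set.MapsTo
              (fun z : ell1 => (∑' i, z i * emv m i, ∑' i, z i * emv k i)) E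
              ({((1:ℝ),(0:ℝ)), (-1,0), (0,1), (0,-1), (0,0)} : Set (ℝ×ℝ)) := by
            intro z hz
            obtain ⟨j, τ, hτ, -, hzval⟩ := hEval z hz
            simp only [hzval]
            by_cases hjm : j = m
            · subst hjm
              rw [emv_self, mul_one, emv_ne (Ne.symm hkm), mul_zero]
              rcases hτ with rfl | rfl <;>
                norm_num [Set.mem_insert_iff, Set.mem_singleton_iff, Prod.mk.injEq]
            · by_cases hjk : j = k
              · subst hjk
                rw [emv_self, mul_one, emv_ne hkm, mul_zero]
                rcases hτ with rfl | rfl <;>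
                  norm_num [Set.mem_insert_iff, Set.mem_singleton_iff, Prod.mk.injEq]
              · rw [emv_ne hjm, emv_ne hjk, mul_zero]
                norm_num [Set.mem_insert_iff, Set.mem_singleton_iff, Prod.mk.injEq]
          have hp := @aux_mem ell1 (ℝ×ℝ) ws _ _
            (hcont2 (emv m) (hWem m hm) (emv k) (hWem k hk)) E _
            ((Set.Finite.insert _ (Set.Finite.insert _ (Set.Finite.insert _
              (Set.Finite.insert _ (Set.finite_singleton _))))).isClosed) hmaps y hyCl
          simp only [tsum_emv, Set.mem_insert_iff, Set.mem_singleton_iff, Prod.mk.injEq] at hp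
          rcases hp with ⟨h1,h2⟩|⟨h1,h2⟩|⟨h1,h2⟩|⟨h1,h2⟩|⟨h1,h2⟩ <;>
            rcases hs with rfl | rfl <;> first | exact h2 | linarith
        have hmaps3 : Set.MapsTo (fun z : ell1 =>
            (∑' i, z i * emv m i, (∑' i, z i * xv0 r i, ∑' i, z i * xv1 r i))) E
            ({((1:ℝ), ((r/2 : ℝ), (r/2 : ℝ))), (-1, (-(r/2), -(r/2))), (0, (1, 0)),
              (0, (-1, 0)), (0, (0, 1)), (0, (0, -1)), (0, (r/2, r/2)),
              (0, (-(r/2), -(r/2)))} : Set (ℝ×ℝ×ℝ)) := by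
          intro z hz
          obtain ⟨j, τ, hτ, -, hzval⟩ := hEval z hz
          simp only [hzval]
          rcases Nat.lt_or_ge j 2 with hj2 | hj2
          · rcases (by omega : j = 0 ∨ j = 1) with rfl | rfl
            · rw [emv_ne (by omega : (0:ℕ) ≠ m), xv0_zero, xv1_zero]
              rcases hτ with rfl | rfl <;>
                norm_num [Set.mem_insert_iff, Set.mem_singleton_iff, Prod.mk.injEq]
            · rw [emv_ne (by omega : (1:ℕ) ≠ m), xv0_one, xv1_one]
              rcases hτ with rfl | rfl <;>
                norm_num [Set.mem_insert_iff, Set.mem_singleton_iff, Prod.mk.injEq]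
          · rw [xv0_two r hj2, xv1_two r hj2]
            by_cases hjm : j = m
            · subst hjm
              rw [emv_self]
              rcases hτ with rfl | rfl <;>
                norm_num [Set.mem_insert_iff, Set.mem_singleton_iff, Prod.mk.injEq]
            · rw [emv_ne hjm]
              rcases hτ with rfl | rfl <;>
                norm_num [Set.mem_insert_iff, Set.mem_singleton_iff, Prod.mk.injEq]
        have hT := @aux_mem ell1 (ℝ×ℝ×ℝ) ws _ _
          (hcont3 (emv m) (hWem m hm) (xv0 r) hW0 (xv1 r) hW1) E _
          ((Set.Finite.insert _ (Set.Finite.insert _ (Set.Finite.insert _ (Set.Finite.insert _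
            (Set.Finite.insert _ (Set.Finite.insert _ (Set.Finite.insert _
              (Set.finite_singleton _)))))))).isClosed) hmaps3 y hyCl
        simp only [tsum_emv] at hT
        rw [tsum_xv0' r y m hm hB1, tsum_xv1' r y m hm hB1, hym] at hT
        simp only [Set.mem_insert_iff, Set.mem_singleton_iff, Prod.mk.injEq] at hT
        have hy01 : y 0 = 0 ∧ y 1 = 0 := by
          rcases hs with rfl | rfl <;>
            rcases hT with ⟨h1,h2,h3⟩|⟨h1,h2,h3⟩|⟨h1,h2,h3⟩|⟨h1,h2,h3⟩|⟨h1,h2,h3⟩|⟨h1,h2,h3⟩|⟨h1,h2,h3⟩|⟨h1,h2,h3⟩ <;>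
            exact ⟨by linarith, by linarith⟩
        have hyform : y = s • basisv m := by
          apply lp.ext
          funext i
          rw [lp.coeFn_smul, Pi.smul_apply, smul_eq_mul, basisv_apply]
          rcases Nat.lt_or_ge i 2 with hi2 | hi2
          · rcases (by omega : i = 0 ∨ i = 1) with rfl | rfl
            · rw [if_neg (by omega : ¬(0:ℕ) = m), mul_zero]
              exact hy01.1
            · rw [if_neg (by omega : ¬(1:ℕ) = m), mul_zero]
              exact hy01.2
          · by_cases him : i = m
            · subst him
              rw [if_pos rfl, mul_one]
              exact hym
            · rw [if_neg him, mul_zero]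
              exact hB1 i hi2 him
        apply hyE
        rcases hs with rfl | rfl
        · exact ⟨m, Or.inl (by rw [hyform, one_smul])⟩
        · exact ⟨m, Or.inr (by rw [hyform]; simp)⟩
      have hmaps : Set.MapsTo (fun z : ell1 => ∑' i, z i * emv m i) E
          ({0,1,-1} : Set ℝ) := by
        intro z hz
        obtain ⟨k, τ, hτ, -, hzval⟩ := hEval z hz
        simp only [hzval]
        by_cases hkm : k = m
        · subst hkm
          rw [emv_self, mul_one]
          rcases hτ with rfl | rfl <;>
            norm_num [Set.mem_insert_iff, Set.mem_singleton_iff]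
        · rw [emv_ne hkm, mul_zero]
          norm_num [Set.mem_insert_iff, Set.mem_singleton_iff]
      have hA := @aux_mem ell1 ℝ ws _ _ (hcont (emv m) (hWem m hm)) E _
        ((Set.Finite.insert _ (Set.Finite.insert _ (Set.finite_singleton _))).isClosed)
        hmaps y hyCl
      simp only [tsum_emv, Set.mem_insert_iff, Set.mem_singleton_iff] at hA
      rcases hA with h | h | h
      · exact h
      · exact (hBgen 1 (Or.inl rfl) h).elim
      · exact (hBgen (-1) (Or.inr rfl) h).elim
    -- the first two coordinates
    have hmapsP : Set.MapsTo
        (fun z : ell1 => (∑' i, z i * xv0 r i, ∑' i, z i * xv1 r i)) E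
        ({((1:ℝ),(0:ℝ)), (-1,0), (0,1), (0,-1), ((r/2 : ℝ),(r/2 : ℝ)),
          (-(r/2),-(r/2))} : Set (ℝ×ℝ)) := by
      intro z hz
      obtain ⟨j, τ, hτ, -, hzval⟩ := hEval z hz
      simp only [hzval]
      rcases Nat.lt_or_ge j 2 with hj2 | hj2
      · rcases (by omega : j = 0 ∨ j = 1) with rfl | rfl
        · rw [xv0_zero, xv1_zero]
          rcases hτ with rfl | rfl <;>
            norm_num [Set.mem_insert_iff, Set.mem_singleton_iff, Prod.mk.injEq]
        · rw [xv0_one, xv1_one]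
          rcases hτ with rfl | rfl <;>
            norm_num [Set.mem_insert_iff, Set.mem_singleton_iff, Prod.mk.injEq]
      · rw [xv0_two r hj2, xv1_two r hj2]
        rcases hτ with rfl | rfl <;>
          norm_num [Set.mem_insert_iff, Set.mem_singleton_iff, Prod.mk.injEq]
    have hP := @aux_mem ell1 (ℝ×ℝ) ws _ _ (hcont2 (xv0 r) hW0 (xv1 r) hW1) E _
      ((Set.Finite.insert _ (Set.Finite.insert _ (Set.Finite.insert _ (Set.Finite.insert _
        (Set.Finite.insert _ (Set.finite_singleton _)))))).isClosed) hmapsP y hyCl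
    simp only [Set.mem_insert_iff, Set.mem_singleton_iff, Prod.mk.injEq] at hP
    rw [tsum_xv0 r y htail, tsum_xv1 r y htail] at hP
    have hunit : ∀ (j : ℕ) (σ : ℝ), j < 2 → (σ = 1 ∨ σ = -1) → y j = σ →
        y (1 - j) = 0 → False := by
      intro j σ hj hσ hj1 hj2
      have hyform : y = σ • basisv j := by
        apply lp.ext
        funext i
        rw [lp.coeFn_smul, Pi.smul_apply, smul_eq_mul, basisv_apply]
        by_cases hij : i = j
        · subst hij
          rw [if_pos rfl, mul_one]
          exact hj1
        · rw [if_neg hij, mul_zero]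
          rcases Nat.lt_or_ge i 2 with hi2 | hi2
          · have hii : i = 1 - j := by omega
            rw [hii]
            exact hj2
          · exact htail i hi2
      apply hyE
      rcases hσ with rfl | rfl
      · exact ⟨j, Or.inl (by rw [hyform, one_smul])⟩
      · exact ⟨j, Or.inr (by rw [hyform]; simp)⟩
    rcases hP with ⟨h1,h2⟩|⟨h1,h2⟩|⟨h1,h2⟩|⟨h1,h2⟩|⟨h1,h2⟩|⟨h1,h2⟩
    · exact (hunit 0 1 (by omega) (Or.inl rfl) h1 (by simpa using h2)).elim
    · exact (hunit 0 (-1) (by omega) (Or.inr rfl) h1 (by simpa using h2)).elim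
    · exact (hunit 1 1 (by omega) (Or.inl rfl) h2 (by simpa using h1)).elim
    · exact (hunit 1 (-1) (by omega) (Or.inr rfl) h2 (by simpa using h1)).elim
    · rw [ell1_norm_two y htail, h1, h2, abs_of_nonneg (by linarith)]
      linarith
    · rw [ell1_norm_two y htail, h1, h2, abs_neg, abs_of_nonneg (by linarith)]
      linarith
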